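/- Every power series F ∈ F₂⟦x, y, z, w⟧ is congruent modulo the ideal (w², x·w, x·z) to a power series of the form a + w·b + c, where a ∈ F₂⟦x, y, z, w⟧ involves only the variables x and y, and b and c involve only the variables y and z. -/

import Mathlib

open MvPowerSeries

/-- Every power series `F ∈ 𝔽₂⟦x, y, z, w⟧` (variables `x = X 0`, `y = X 1`, `z = X 2`,
`w = X 3`) is congruent modulo the ideal `(w², x·w, x·z)` to one of the form
`a + w·b + c`, where `a` involves only `x, y` and `b, c` involve only `y, z`. -/
theorem stmt17 (F : MvPowerSeries (Fin 4) (ZMod 2)) :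
    ∃ a b c : MvPowerSeries (Fin 4) (ZMod 2),
      (∀ d : Fin 4 →₀ ℕ, coeff d a ≠ 0 → d 2 = 0 ∧ d 3 = 0) ∧
      (∀ d : Fin 4 →₀ ℕ, coeff d b ≠ 0 → d 0 = 0 ∧ d 3 = 0) ∧
      (∀ d : Fin 4 →₀ ℕ, coeff d c ≠ 0 → d 0 = 0 ∧ d 3 = 0) ∧
      F - (a + X 3 * b + c) ∈
        Ideal.span {(X 3 ^ 2 : MvPowerSeries (Fin 4) (ZMod 2)), X 0 * X 3, X 0 * X 2} := by
  classical
  set e0 : Fin 4 →₀ ℕ := Finsupp.single 0 1 with he0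
  set e2 : Fin 4 →₀ ℕ := Finsupp.single 2 1 with he2
  set e3 : Fin 4 →₀ ℕ := Finsupp.single 3 1 with he3
  set a : MvPowerSeries (Fin 4) (ZMod 2) :=
    fun d => if d 2 = 0 ∧ d 3 = 0 then coeff d F else 0 with ha
  set b : MvPowerSeries (Fin 4) (ZMod 2) :=
    fun d => if d 0 = 0 ∧ d 3 = 0 then coeff (d + e3) F else 0 with hb
  set c : MvPowerSeries (Fin 4) (ZMod 2) :=
    fun d => if d 0 = 0 ∧ d 3 = 0 ∧ d 2 ≠ 0 then coeff d F else 0 with hc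
  refine ⟨a, b, c, ?_, ?_, ?_, ?_⟩
  · intro d hd
    by_contra h
    apply hd
    show (if d 2 = 0 ∧ d 3 = 0 then coeff d F else 0) = 0
    rw [if_neg h]
  · intro d hd
    by_contra h
    apply hd
    show (if d 0 = 0 ∧ d 3 = 0 then coeff (d + e3) F else 0) = 0
    rw [if_neg h]
  · intro d hd
    by_contra h
    apply hd
    show (if d 0 = 0 ∧ d 3 = 0 ∧ d 2 ≠ 0 then coeff d F else 0) = 0
    rw [if_neg (by tauto)]
  set r : MvPowerSeries (Fin 4) (ZMod 2) := F - (a + X 3 * b + c) with hr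
  set p : MvPowerSeries (Fin 4) (ZMod 2) :=
    fun d => coeff (d + Finsupp.single 3 2) r with hp
  set q : MvPowerSeries (Fin 4) (ZMod 2) :=
    fun d => if d 3 = 0 then coeff (d + (e0 + e3)) r else 0 with hq
  set s : MvPowerSeries (Fin 4) (ZMod 2) :=
    fun d => if d 3 = 0 then coeff (d + (e0 + e2)) r else 0 with hs
  have hx32 : (X 3 ^ 2 : MvPowerSeries (Fin 4) (ZMod 2))
      = monomial (Finsupp.single 3 2) 1 := X_pow_eq 3 2
  have hx03 : (X 0 * X 3 : MvPowerSeries (Fin 4) (ZMod 2))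
      = monomial (e0 + e3) 1 := by
    rw [X_def, X_def, monomial_mul_monomial, one_mul]
  have hx02 : (X 0 * X 2 : MvPowerSeries (Fin 4) (ZMod 2))
      = monomial (e0 + e2) 1 := by
    rw [X_def, X_def, monomial_mul_monomial, one_mul]
  have key : r = X 3 ^ 2 * p + (X 0 * X 3) * q + (X 0 * X 2) * s := by
    ext m
    have hle03 : e0 + e3 ≤ m ↔ 1 ≤ m 0 ∧ 1 ≤ m 3 := by
      rw [Finsupp.le_def]
      constructor
      · intro h
        refine ⟨le_trans ?_ (h 0), le_trans ?_ (h 3)⟩ <;>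
          simp [he0, he3, Finsupp.single_apply]
      · intro ⟨h1, h2⟩ i
        fin_cases i <;>
          simp [he0, he3, Finsupp.single_apply] <;> omega
    have hle02 : e0 + e2 ≤ m ↔ 1 ≤ m 0 ∧ 1 ≤ m 2 := by
      rw [Finsupp.le_def]
      constructor
      · intro h
        refine ⟨le_trans ?_ (h 0), le_trans ?_ (h 2)⟩ <;>
          simp [he0, he2, Finsupp.single_apply]
      · intro ⟨h1, h2⟩ i
        fin_cases i <;>
          simp [he0, he2, Finsupp.single_apply] <;> omega
    have hXb : ∀ d : Fin 4 →₀ ℕ, coeff d (X 3 * b)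
        = if 1 ≤ d 3 then b (d - e3) else 0 := by
      intro d
      rw [show (X 3 : MvPowerSeries (Fin 4) (ZMod 2)) = monomial e3 1 from
        he3 ▸ X_def 3, coeff_monomial_mul]
      simp only [he3, Finsupp.single_le_iff, one_mul, coeff_apply]
    have hrm : ∀ d : Fin 4 →₀ ℕ, r d
        = F d - (a d + (if 1 ≤ d 3 then b (d - e3) else 0) + c d) := by
      intro d
      have : coeff d r
          = F d - (a d + (if 1 ≤ d 3 then b (d - e3) else 0) + c d) := by
        rw [hr, map_sub, map_add, map_add, hXb d]
        simp only [coeff_apply]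
      exact this
    rw [map_add, map_add, hx32, hx03, hx02, coeff_monomial_mul, coeff_monomial_mul,
      coeff_monomial_mul]
    simp only [Finsupp.single_le_iff, hle03, hle02, one_mul, coeff_apply]
    rcases Nat.lt_or_ge (m 3) 1 with h3 | h3
    · -- m 3 = 0
      have h3' : m 3 = 0 := by omega
      rw [if_neg (by omega), if_neg (by omega)]
      by_cases h02 : 1 ≤ m 0 ∧ 1 ≤ m 2
      · have hsub : (m - (e0 + e2)) 3 = 0 := by
          rw [Finsupp.tsub_apply]
          simp [he0, he2, Finsupp.single_apply]
          omega
        rw [if_pos h02]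
        simp only [hs, coeff_apply]
        rw [if_pos hsub, tsub_add_cancel_of_le (hle02.mpr h02)]
        ring
      · rw [if_neg h02, hrm m]
        simp only [ha, hb, hc]
        rw [if_neg (by omega : ¬ 1 ≤ m 3)]
        by_cases h2 : m 2 = 0
        · rw [if_pos ⟨h2, h3'⟩, if_neg (by tauto)]
          simp only [coeff_apply]; ring
        · have h0 : m 0 = 0 := by omega
          rw [if_neg (by tauto), if_pos ⟨h0, h3', h2⟩]
          simp only [coeff_apply]; ring
    · rcases Nat.lt_or_ge (m 3) 2 with h3b | h3b
      · -- m 3 = 1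
        have h3' : m 3 = 1 := by omega
        rw [if_neg (by omega)]
        have hs0 : (if 1 ≤ m 0 ∧ 1 ≤ m 2 then s (m - (e0 + e2)) else 0) = 0 := by
          split_ifs with h
          · simp only [hs]
            rw [if_neg (by
              rw [Finsupp.tsub_apply]
              simp [he0, he2, Finsupp.single_apply]
              omega)]
          · rfl
        rw [hs0]
        by_cases h0 : 1 ≤ m 0
        · have hsub3 : (m - (e0 + e3)) 3 = 0 := by
            rw [Finsupp.tsub_apply]
            simp only [he0, he3, Finsupp.add_apply, Finsupp.single_apply]
            norm_num; omega
          rw [if_pos ⟨h0, h3⟩]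
          simp only [hq, coeff_apply]
          rw [if_pos hsub3, tsub_add_cancel_of_le (hle03.mpr ⟨h0, h3⟩)]
          ring
        · rw [if_neg (by omega), hrm m]
          simp only [ha, hb, hc]
          have hmm : (m - e3) + e3 = m :=
            tsub_add_cancel_of_le (he3 ▸ Finsupp.single_le_iff.mpr h3)
          have hb0 : (m - e3) 0 = 0 := by
            rw [Finsupp.tsub_apply]; omega
          have hb3 : (m - e3) 3 = 0 := by
            rw [Finsupp.tsub_apply]
            simp [he3, Finsupp.single_apply]
            omega
          rw [if_neg (show ¬(m 2 = 0 ∧ m 3 = 0) by omega),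
            if_pos (show 1 ≤ m 3 from h3),
            if_pos (show (m - e3) 0 = 0 ∧ (m - e3) 3 = 0 from ⟨hb0, hb3⟩), hmm,
            if_neg (show ¬(m 0 = 0 ∧ m 3 = 0 ∧ m 2 ≠ 0) by omega)]
          simp only [coeff_apply]; ring
      · -- m 3 ≥ 2
        rw [if_pos h3b]
        simp only [hp, coeff_apply]
        rw [tsub_add_cancel_of_le (Finsupp.single_le_iff.mpr h3b)]
        have hq0 : (if 1 ≤ m 0 ∧ 1 ≤ m 3 then q (m - (e0 + e3)) else 0) = 0 := by
          split_ifs with h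
          · simp only [hq]
            rw [if_neg (by
              rw [Finsupp.tsub_apply]
              simp [he0, he3, Finsupp.single_apply]
              omega)]
          · rfl
        have hs0 : (if 1 ≤ m 0 ∧ 1 ≤ m 2 then s (m - (e0 + e2)) else 0) = 0 := by
          split_ifs with h
          · simp only [hs]
            rw [if_neg (by
              rw [Finsupp.tsub_apply]
              simp [he0, he2, Finsupp.single_apply]
              omega)]
          · rfl
        rw [hq0, hs0]
        ring
  rw [key]
  refine add_mem (add_mem ?_ ?_) ?_ <;>
    exact Ideal.mul_mem_right _ _ (Ideal.subset_span (by simp))
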